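/- Let A be a free abelian group of finite rank n with basis v₁,…,vₙ, let A* be its ultrapower over an ℵ₁-incomplete ultrafilter D, let (b_{ij}) be an n×n integer matrix with determinant ±1, and let α₁,…,αₙ be elements of the ultrapower Z* of Z such that no prime p divides any α_i in Z*. Then there is a group automorphism ψ of A* with ψ(v_i) = Σ_k α_k b_{ik} v_k. -/

import Mathlib

open Filter

namespace Stmt17

variable {ι : Type} (U : Ultrafilter ι)

local notation "Z" => Germ (U : Filter ι) ℤ

lemma germ_exists_rep {β : Type*} (x : Germ (U : Filter ι) β) :
    ∃ u : ι → β, (↑u : Germ (U:Filter ι) β) = x :=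
  x.inductionOn fun u => ⟨u, rfl⟩

lemma intCast_germ (d : ℤ) : ((d : ℤ) : Z) = (↑(fun _ : ι => d) : Z) := rfl

lemma germ_dvd_of_mem (d : ℤ) (u : ι → ℤ) (h : {i | d ∣ u i} ∈ U) :
    ((d : ℤ) : Z) ∣ (↑u : Z) := by
  refine ⟨(↑(fun i => u i / d) : Z), ?_⟩
  rw [intCast_germ, ← Germ.coe_mul, Germ.coe_eq]
  filter_upwards [h] with i hi
  exact (Int.mul_ediv_cancel' hi).symm

lemma mem_of_germ_dvd {d : ℤ} {u : ι → ℤ} (h : ((d : ℤ) : Z) ∣ (↑u : Z)) :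
    {i | d ∣ u i} ∈ U := by
  obtain ⟨c, hc⟩ := h
  induction c using Germ.inductionOn with
  | h c =>
    rw [intCast_germ, ← Germ.coe_mul, Germ.coe_eq] at hc
    rw [← Ultrafilter.mem_coe]
    filter_upwards [hc] with i hi
    exact ⟨c i, hi⟩

lemma int_dvd_of_germ_dvd {d z : ℤ} (h : ((d : ℤ) : Z) ∣ ((z : ℤ) : Z)) : d ∣ z := by
  have := mem_of_germ_dvd U (u := fun _ => z) (d := d) h
  obtain ⟨i, hi⟩ := Filter.nonempty_of_mem (f := (U : Filter ι)) this
  exact hi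

lemma germ_cancel {d : ℤ} (hd : d ≠ 0) {x y : Z} (h : ((d:ℤ):Z) * x = ((d:ℤ):Z) * y) :
    x = y := by
  induction x using Germ.inductionOn with
  | h u =>
    induction y using Germ.inductionOn with
    | h w =>
      rw [intCast_germ, ← Germ.coe_mul, ← Germ.coe_mul, Germ.coe_eq] at h
      rw [Germ.coe_eq]
      filter_upwards [h] with i hi
      exact mul_left_cancel₀ hd hi

/-- The subgroup of elements divisible by every nonzero integer. -/
def Kdiv : Submodule ℤ Z where
  carrier := {x | ∀ d : ℤ, d ≠ 0 → ((d : ℤ) : Z) ∣ x}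
  add_mem' hx hy d hd := dvd_add (hx d hd) (hy d hd)
  zero_mem' d _ := dvd_zero _
  smul_mem' z x hx d hd := by
    rw [zsmul_eq_mul]
    exact (hx d hd).mul_left _

lemma mul_mem_Kdiv {x : Z} (hx : x ∈ Kdiv U) (t : Z) : t * x ∈ Kdiv U :=
  fun d hd => (hx d hd).mul_left t

lemma intCast_mem_Kdiv {z : ℤ} (h : ((z : ℤ) : Z) ∈ Kdiv U) : z = 0 := by
  by_contra hz
  have h2 : (2 * z) ∣ z := int_dvd_of_germ_dvd U (h (2 * z) (by simp [hz]))
  have h3 : (2 * z).natAbs ∣ z.natAbs := Int.natAbs_dvd_natAbs.mpr h2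
  have h4 := Nat.le_of_dvd (Int.natAbs_pos.mpr hz) h3
  rw [Int.natAbs_mul] at h4
  have h5 : 0 < z.natAbs := Int.natAbs_pos.mpr hz
  norm_num at h4
  omega

lemma Kdiv_divisible {x : Z} (hx : x ∈ Kdiv U) {d : ℤ} (hd : d ≠ 0) :
    ∃ y, y ∈ Kdiv U ∧ ((d : ℤ) : Z) * y = x := by
  obtain ⟨y, hy⟩ := hx d hd
  refine ⟨y, fun e he => ?_, hy.symm⟩
  obtain ⟨w, hw⟩ := hx (d * e) (mul_ne_zero hd he)
  refine ⟨w, germ_cancel U hd ?_⟩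
  rw [hy] at hw
  rw [hw]
  push_cast
  ring


lemma baer_Kdiv : Module.Baer ℤ ↥(Kdiv U) := by
  intro I g
  obtain ⟨n, hn⟩ : ∃ n : ℤ, I = Ideal.span {n} :=
    ⟨Submodule.IsPrincipal.generator I, (Ideal.span_singleton_generator I).symm⟩
  subst hn
  by_cases hn0 : n = 0
  · refine ⟨0, fun x mem => ?_⟩
    subst hn0
    have hx : x = 0 := by
      have := mem
      rw [Ideal.span_singleton_eq_bot.mpr rfl] at this
      simpa using this
    subst hx
    simp only [LinearMap.zero_apply]
    rw [show (⟨(0:ℤ), mem⟩ : ↥(Ideal.span {(0:ℤ)})) = 0 from rfl, map_zero]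
  · have hmem : n ∈ Ideal.span {n} := Ideal.mem_span_singleton_self n
    set q : ↥(Kdiv U) := g ⟨n, hmem⟩ with hq
    obtain ⟨y, hyK, hy⟩ := Kdiv_divisible U q.2 hn0
    refine ⟨LinearMap.toSpanSingleton ℤ ↥(Kdiv U) ⟨y, hyK⟩, fun x mem => ?_⟩
    obtain ⟨c, hc⟩ := Ideal.mem_span_singleton'.mp mem
    have hx : (⟨x, mem⟩ : ↥(Ideal.span {n})) = c • ⟨n, hmem⟩ := by
      ext
      simp [← hc, mul_comm]
    rw [hx, map_smul, ← hq]
    apply Subtype.ext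
    push_cast [LinearMap.toSpanSingleton_apply]
    rw [← hc, ← hy]
    simp only [mul_smul, zsmul_eq_mul]

variable {U} in
lemma coprime_set_mem {a : ι → ℤ}
    (ha : ∀ p : ℕ, p.Prime → ¬ (((p : ℕ) : ℤ) : Z) ∣ (↑a : Z)) {m : ℕ} (hm : 0 < m) :
    {i | IsCoprime (a i) (m : ℤ)} ∈ U := by
  have hp : ∀ p ∈ m.primeFactors, {i | ¬ ((p : ℤ) ∣ a i)} ∈ U := by
    intro p hp
    have hpp := (Nat.mem_primeFactors.mp hp).1
    have : ¬ ({i | (p : ℤ) ∣ a i} ∈ U) := by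
      intro hmem
      exact ha p hpp (germ_dvd_of_mem U _ _ hmem)
    exact (Ultrafilter.compl_mem_iff_notMem.mpr this)
  have hT : (⋂ p ∈ m.primeFactors, {i | ¬ ((p : ℤ) ∣ a i)}) ∈ U := by
    rw [← Ultrafilter.mem_coe]
    exact (Filter.biInter_finset_mem _).mpr hp
  refine Filter.mem_of_superset hT ?_
  intro i hi
  simp only [Set.mem_iInter, Set.mem_setOf_eq] at hi ⊢
  rw [Int.isCoprime_iff_gcd_eq_one]
  by_contra hg
  obtain ⟨p, hpp, hpg⟩ := Nat.exists_prime_and_dvd hg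
  have hgm : (Int.gcd (a i) (m : ℤ) : ℤ) ∣ (m : ℤ) := Int.gcd_dvd_right _ _
  have hpm : (p : ℤ) ∣ (m : ℤ) := dvd_trans (Int.natCast_dvd_natCast.mpr hpg) hgm
  have hpmem : p ∈ m.primeFactors :=
    Nat.mem_primeFactors.mpr ⟨hpp, Int.natCast_dvd_natCast.mp hpm, hm.ne'⟩
  exact hi p hpmem (dvd_trans (Int.natCast_dvd_natCast.mpr hpg) (Int.gcd_dvd_left _ _))

variable {U} in
lemma isCoprime_germ {a : ι → ℤ}
    (ha : ∀ p : ℕ, p.Prime → ¬ (((p : ℕ) : ℤ) : Z) ∣ (↑a : Z)) {d : ℤ} (hd : d ≠ 0) :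
    IsCoprime (↑a : Z) ((d : ℤ) : Z) := by
  have key : ∀ m : ℕ, 0 < m → IsCoprime (↑a : Z) (((m : ℕ) : ℤ) : Z) := by
    intro m hm
    have hS := coprime_set_mem ha hm
    classical
    have hex : ∀ i, ∃ u v : ℤ, IsCoprime (a i) (m : ℤ) → u * a i + v * (m : ℤ) = 1 := by
      intro i
      by_cases h : IsCoprime (a i) (m : ℤ)
      · obtain ⟨u, v, huv⟩ := h
        exact ⟨u, v, fun _ => huv⟩
      · exact ⟨0, 0, fun h' => absurd h' h⟩
    choose s t hst using hex
    refine ⟨(↑s : Z), (↑t : Z), ?_⟩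
    rw [intCast_germ, ← Germ.coe_mul, ← Germ.coe_mul, ← Germ.coe_add, ← Germ.coe_one,
      Germ.coe_eq]
    filter_upwards [hS] with i hi
    simpa using hst i hi
  rcases Int.natAbs_eq d with h1 | h1
  · rw [h1]; exact key _ (Int.natAbs_pos.mpr hd)
  · rw [h1, Int.cast_neg]
    exact (key _ (Int.natAbs_pos.mpr hd)).neg_right

variable {U} in
lemma K_cancel {a : ι → ℤ}
    (ha : ∀ p : ℕ, p.Prime → ¬ (((p : ℕ) : ℤ) : Z) ∣ (↑a : Z)) {γ : Z}
    (h : (↑a : Z) * γ ∈ Kdiv U) : γ ∈ Kdiv U := by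
  intro d hd
  exact ((isCoprime_germ ha hd).symm).dvd_of_dvd_mul_left (h d hd)
variable {U} in
lemma mem_Kdiv_of_nat {x : Z}
    (h : ∀ m : ℕ, 0 < m → (((m : ℕ) : ℤ) : Z) ∣ x) : x ∈ Kdiv U := by
  intro d hd
  rcases Int.natAbs_eq d with h1 | h1
  · rw [h1]; exact h _ (Int.natAbs_pos.mpr hd)
  · rw [h1, Int.cast_neg, neg_dvd]
    exact h _ (Int.natAbs_pos.mpr hd)

variable {U} in
lemma claimA (hU : ∃ f : ℕ → Set ι, (∀ m, f m ∈ U) ∧ (⋂ m, f m) = ∅)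
    {a : ι → ℤ} (ha : ∀ p : ℕ, p.Prime → ¬ (((p : ℕ) : ℤ) : Z) ∣ (↑a : Z))
    (β : Z) : ∃ γ : Z, β - (↑a : Z) * γ ∈ Kdiv U := by
  classical
  obtain ⟨b, rfl⟩ := germ_exists_rep U β
  obtain ⟨f, hfU, hfE⟩ := hU
  set S : ℕ → Set ι :=
    fun m => ⋂ k ∈ Finset.range (m + 1), (f k ∩ {i | IsCoprime (a i) ((k.factorial : ℕ) : ℤ)})
    with hS
  have hSU : ∀ m, S m ∈ U := by
    intro m
    rw [hS, ← Ultrafilter.mem_coe]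
    refine (Filter.biInter_finset_mem _).mpr fun k _ => ?_
    exact Filter.inter_mem (hfU k) (coprime_set_mem ha k.factorial_pos)
  have hSanti : ∀ {m m' : ℕ}, m ≤ m' → S m' ⊆ S m := by
    intro m m' hmm i hi
    simp only [hS, Set.mem_iInter] at hi ⊢
    intro k hk
    exact hi k (Finset.mem_range.mpr (lt_of_lt_of_le (Finset.mem_range.mp hk) (by omega)))
  have hSf : ∀ m, S m ⊆ f m := by
    intro m i hi
    simp only [hS, Set.mem_iInter] at hi
    exact (hi m (Finset.mem_range.mpr (by omega))).1
  have hScop : ∀ m, S m ⊆ {i | IsCoprime (a i) ((m.factorial : ℕ) : ℤ)} := by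
    intro m i hi
    simp only [hS, Set.mem_iInter] at hi
    exact (hi m (Finset.mem_range.mpr (by omega))).2
  have hSempty : ∀ i, ∃ m, i ∉ S m := by
    intro i
    by_contra hcon
    push_neg at hcon
    have : i ∈ ⋂ m, f m := Set.mem_iInter.mpr fun m => hSf m (hcon m)
    rw [hfE] at this
    exact this
  set M : ι → ℕ := fun i => Nat.find (hSempty i) with hM
  have key : ∀ i, ∃ ci : ℤ, 0 < M i → (((M i - 1).factorial : ℕ) : ℤ) ∣ (b i - a i * ci) := by
    intro i
    by_cases h0 : 0 < M i
    · have hmem : i ∈ S (M i - 1) := by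
        have := Nat.find_min (hSempty i) (show M i - 1 < M i by omega)
        exact not_not.mp this
      obtain ⟨s, t, hst⟩ := hScop (M i - 1) hmem
      refine ⟨b i * s, fun _ => ⟨b i * t, ?_⟩⟩
      linear_combination (-(b i)) * hst
    · exact ⟨0, fun h => absurd h h0⟩
  choose c hc using key
  refine ⟨(↑c : Z), mem_Kdiv_of_nat fun m hm => ?_⟩
  have hsub : S m ⊆ {i | (m : ℤ) ∣ (b i - a i * c i)} := by
    intro i hi
    have hMi : m < M i := by
      rw [hM, Nat.lt_find_iff]
      intro k hk
      exact not_not.mpr (hSanti hk hi)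
    have h1 := hc i (by omega)
    have h2 : ((m.factorial : ℕ) : ℤ) ∣ (((M i - 1).factorial : ℕ) : ℤ) :=
      Int.natCast_dvd_natCast.mpr (Nat.factorial_dvd_factorial (by omega))
    have h3 : (m : ℤ) ∣ ((m.factorial : ℕ) : ℤ) :=
      Int.natCast_dvd_natCast.mpr (Nat.dvd_factorial hm (le_refl m))
    exact h3.trans (h2.trans h1)
  have : ((m : ℤ) : Z) ∣ (↑(b - a * c) : Z) :=
    germ_dvd_of_mem U _ _ (Filter.mem_of_superset (hSU m) (by exact_mod_cast hsub))
  rw [Germ.coe_sub, Germ.coe_mul] at this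
  exact_mod_cast this
variable {U} in
lemma exists_theta (hU : ∃ f : ℕ → Set ι, (∀ m, f m ∈ U) ∧ (⋂ m, f m) = ∅)
    {α : Z} (hα : ∀ p : ℕ, p.Prime → ¬ (((p : ℕ) : Z) ∣ α)) :
    ∃ θ : Z ≃+ Z, θ 1 = α := by
  classical
  obtain ⟨a, rfl⟩ := germ_exists_rep U α
  have ha : ∀ p : ℕ, p.Prime → ¬ (((p : ℕ) : ℤ) : Z) ∣ (↑a : Z) := by
    intro p hp
    rw [Int.cast_natCast]
    exact hα p hp
  by_cases hcase : ∃ z : ℤ, (z = 1 ∨ z = -1) ∧ (↑a : Z) - ((z : ℤ) : Z) ∈ Kdiv U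
  · -- Case 2 : α = ±1 + κ with κ infinitely divisible
    obtain ⟨ε, hε, hκmem⟩ := hcase
    set κ : ↥(Kdiv U) := ⟨(↑a : Z) - ((ε : ℤ) : Z), hκmem⟩ with hκ
    set F : ↥(Kdiv U) × ℤ →+ Z :=
      AddMonoidHom.mk' (fun p => (p.1 : Z) + ((p.2 : ℤ) : Z))
        (by intro p q; simp only [Prod.fst_add, Prod.snd_add]; push_cast; ring) with hF
    have hFinj : Function.Injective F := by
      rw [injective_iff_map_eq_zero]
      rintro ⟨k, z⟩ h
      simp only [hF, AddMonoidHom.mk'_apply] at h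
      have hz' : ((z : ℤ) : Z) = -(k : Z) := by linear_combination h
      have hzK : ((z : ℤ) : Z) ∈ Kdiv U := by
        rw [hz']
        exact neg_mem k.2
      have hz0 : z = 0 := intCast_mem_Kdiv U hzK
      subst hz0
      have hk : (k : Z) = 0 := by
        rw [Int.cast_zero, add_zero] at h
        exact h
      have : k = 0 := Subtype.ext hk
      simp [this]
    set G : ↥(Kdiv U) × ℤ →+ ↥(Kdiv U) :=
      AddMonoidHom.mk' (fun p => p.2 • κ) (by intro p q; exact add_smul _ _ _) with hG
    obtain ⟨η, hη⟩ := (baer_Kdiv U).extension_property_addMonoidHom F hFinj G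
    have hη1 : η 1 = κ := by
      have := DFunLike.congr_fun hη ((0 : ↥(Kdiv U)), (1 : ℤ))
      simpa [hF, hG] using this
    have hηK : ∀ k : ↥(Kdiv U), η ↑k = 0 := by
      intro k
      have := DFunLike.congr_fun hη (k, (0 : ℤ))
      simpa [hF, hG] using this
    set e : Z := ((ε : ℤ) : Z) with he
    have he2 : e * e = 1 := by
      rcases hε with rfl | rfl <;> norm_num [he]
    have hsm : ∀ y : ↥(Kdiv U), e * (y : Z) = ((ε • y : ↥(Kdiv U)) : Z) := by
      intro y
      rw [Submodule.coe_smul, zsmul_eq_mul, he]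
    have hsm2 : ∀ y : ↥(Kdiv U), ε • ε • y = y := by
      intro y
      rw [smul_smul]
      have : ε * ε = 1 := by rcases hε with rfl | rfl <;> norm_num
      rw [this, one_smul]
    refine ⟨{ toFun := fun x => e * x + ↑(η x),
              invFun := fun x => e * x - e * ↑(η (e * x)),
              left_inv := ?_, right_inv := ?_, map_add' := ?_ }, ?_⟩
    · intro x
      show e * (e * x + ↑(η x)) - e * ↑(η (e * (e * x + ↑(η x)))) = x
      have h1 : e * (e * x + ↑(η x)) = x + e * ↑(η x) := by
        rw [mul_add, ← mul_assoc, he2, one_mul]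
      rw [h1, hsm (η x), map_add, hηK (ε • η x), add_zero, hsm (η x)]
      exact add_sub_cancel_right x _
    · intro x
      show e * (e * x - e * ↑(η (e * x))) + ↑(η (e * x - e * ↑(η (e * x)))) = x
      rw [hsm (η (e * x)), map_sub, hηK (ε • η (e * x)), sub_zero, mul_sub, ← mul_assoc, he2,
        one_mul, hsm (ε • η (e * x)), hsm2]
      exact sub_add_cancel x _
    · intro x y
      show e * (x + y) + ↑(η (x + y)) = (e * x + ↑(η x)) + (e * y + ↑(η y))
      rw [map_add, mul_add]
      push_cast
      ring
    · show e * 1 + ↑(η 1) = ↑a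
      rw [mul_one, hη1, hκ]
      simp [he]
  · -- Case 1 : no integer translate of α is infinitely divisible
    have hindep : ∀ zm zl : ℤ, ((zm : ℤ) : Z) + ((zl : ℤ) : Z) * ↑a ∈ Kdiv U →
        zm = 0 ∧ zl = 0 := by
      intro zm zl hmem
      by_cases hl : zl = 0
      · subst hl
        rw [Int.cast_zero, zero_mul, add_zero] at hmem
        exact ⟨intCast_mem_Kdiv U hmem, rfl⟩
      exfalso
      set g : ℕ := Int.gcd zm zl with hgdef
      have hgpos : 0 < g := Int.gcd_pos_of_ne_zero_right zm hl
      have hg0 : (g : ℤ) ≠ 0 := by exact_mod_cast hgpos.ne'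
      set m1 : ℤ := zm / g with hm1def
      set l1 : ℤ := zl / g with hl1def
      have hm1 : (g : ℤ) * m1 = zm := Int.mul_ediv_cancel' (Int.gcd_dvd_left _ _)
      have hl1 : (g : ℤ) * l1 = zl := Int.mul_ediv_cancel' (Int.gcd_dvd_right _ _)
      have hco : Int.gcd m1 l1 = 1 := Int.gcd_div_gcd_div_gcd hgpos
      have hl1ne : l1 ≠ 0 := by
        intro h
        rw [h, mul_zero] at hl1
        exact hl (hl1.symm)
      have hK1 : ((m1 : ℤ) : Z) + ((l1 : ℤ) : Z) * ↑a ∈ Kdiv U := by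
        intro d hd
        obtain ⟨w, hw⟩ := hmem (d * g) (mul_ne_zero hd hg0)
        refine ⟨w, germ_cancel U hg0 ?_⟩
        rw [← hm1, ← hl1] at hw
        push_cast at hw
        push_cast
        linear_combination hw
      have hl1abs : l1.natAbs = 1 := by
        by_contra hne
        obtain ⟨p, hpp, hpd⟩ := Nat.exists_prime_and_dvd hne
        have hpl : (p : ℤ) ∣ l1 :=
          (Int.natCast_dvd_natCast.mpr hpd).trans (Int.natAbs_dvd.mpr dvd_rfl)
        have hpl' : ((p : ℤ) : Z) ∣ ((l1 : ℤ) : Z) := by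
          obtain ⟨w, hw⟩ := hpl
          exact ⟨((w : ℤ) : Z), by rw [hw]; push_cast; ring⟩
        have hpla : ((p : ℤ) : Z) ∣ ((l1 : ℤ) : Z) * ↑a := hpl'.mul_right _
        have hpsum := hK1 (p : ℤ) (by exact_mod_cast hpp.ne_zero)
        have hpm1 : (p : ℤ) ∣ m1 := by
          apply int_dvd_of_germ_dvd U
          have := dvd_sub hpsum hpla
          simpa using this
        have hpgcd : (p : ℤ) ∣ (Int.gcd m1 l1 : ℤ) := Int.dvd_coe_gcd hpm1 hpl
        rw [hco] at hpgcd
        have := Int.le_of_dvd one_pos hpgcd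
        have := hpp.two_le
        omega
      have hl1sq : l1 * l1 = 1 := by
        rcases Int.natAbs_eq_iff.mp hl1abs with h | h <;> rw [h] <;> norm_num
      set z : ℤ := -(l1 * m1) with hzdef
      have hzK : (↑a : Z) - ((z : ℤ) : Z) ∈ Kdiv U := by
        have hsmul := (Kdiv U).smul_mem l1 hK1
        have heq : (↑a : Z) - ((z : ℤ) : Z) = l1 • (((m1 : ℤ) : Z) + ((l1 : ℤ) : Z) * ↑a) := by
          rw [zsmul_eq_mul]
          have hc2 : ((l1 : ℤ) : Z) * ((l1 : ℤ) : Z) = 1 := by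
            have := congrArg (fun t : ℤ => ((t : ℤ) : Z)) hl1sq
            push_cast at this
            simpa using this
          push_cast [hzdef]
          linear_combination (-(↑a : Z)) * hc2
        rw [heq]
        exact hsmul
      by_cases hz0 : z = 0
      · rw [hz0] at hzK
        simp only [Int.cast_zero, sub_zero] at hzK
        exact ha 2 Nat.prime_two (hzK 2 two_ne_zero)
      · have hzabs : z.natAbs = 1 := by
          by_contra hne
          obtain ⟨p, hpp, hpd⟩ := Nat.exists_prime_and_dvd hne
          have hpz : (p : ℤ) ∣ z :=
            (Int.natCast_dvd_natCast.mpr hpd).trans (Int.natAbs_dvd.mpr dvd_rfl)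
          have h1 : ((p : ℤ) : Z) ∣ (↑a : Z) - ((z : ℤ) : Z) :=
            hzK (p : ℤ) (by exact_mod_cast hpp.ne_zero)
          have h2 : ((p : ℤ) : Z) ∣ ((z : ℤ) : Z) := by
            obtain ⟨w, hw⟩ := hpz
            exact ⟨((w : ℤ) : Z), by rw [hw]; push_cast; ring⟩
          have h3 : ((p : ℤ) : Z) ∣ (↑a : Z) := by
            have := dvd_add h1 h2
            simpa using this
          exact ha p hpp h3
        exact hcase ⟨z, Int.natAbs_eq_iff.mp hzabs |>.imp (fun h => h) (fun h => by
          simpa using h), hzK⟩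
    -- build the retraction r : Z → K
    set F : ↥(Kdiv U) × (ℤ × ℤ) →+ Z :=
      AddMonoidHom.mk'
        (fun p => (p.1 : Z) + ((p.2.1 : ℤ) : Z) + ((p.2.2 : ℤ) : Z) * ↑a)
        (by
          intro p q
          simp only [Prod.fst_add, Prod.snd_add]
          push_cast
          ring) with hF
    have hFinj : Function.Injective F := by
      rw [injective_iff_map_eq_zero]
      rintro ⟨k, zm, zl⟩ h
      simp only [hF, AddMonoidHom.mk'_apply] at h
      have hmem : ((zm : ℤ) : Z) + ((zl : ℤ) : Z) * ↑a ∈ Kdiv U := by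
        have hrw : ((zm : ℤ) : Z) + ((zl : ℤ) : Z) * ↑a = -(k : Z) := by
          linear_combination h
        rw [hrw]
        exact neg_mem k.2
      obtain ⟨hzm, hzl⟩ := hindep zm zl hmem
      subst hzm; subst hzl
      simp only [Int.cast_zero, add_zero, zero_mul] at h
      have : k = 0 := Subtype.ext (by simpa using h)
      simp [this]
    set G : ↥(Kdiv U) × (ℤ × ℤ) →+ ↥(Kdiv U) :=
      AddMonoidHom.mk' (fun p => p.1) (fun p q => rfl) with hG
    obtain ⟨r, hr⟩ := (baer_Kdiv U).extension_property_addMonoidHom F hFinj G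
    have hrK : ∀ k : ↥(Kdiv U), r ↑k = k := by
      intro k
      have := DFunLike.congr_fun hr (k, (0 : ℤ), (0 : ℤ))
      simpa [hF, hG] using this
    have hr1 : r 1 = 0 := by
      have := DFunLike.congr_fun hr ((0 : ↥(Kdiv U)), (1 : ℤ), (0 : ℤ))
      simpa [hF, hG] using this
    have hra : r ↑a = 0 := by
      have := DFunLike.congr_fun hr ((0 : ↥(Kdiv U)), (0 : ℤ), (1 : ℤ))
      simpa [hF, hG] using this
    set P : Z →+ Z := AddMonoidHom.mk' (fun x => x - ↑(r x))
      (by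
        intro x y
        show x + y - ↑(r (x + y)) = (x - ↑(r x)) + (y - ↑(r y))
        rw [map_add r]
        push_cast
        ring) with hP
    have happ : ∀ y : Z, P y = y - ↑(r y) := fun _ => rfl
    have hPK : ∀ k : ↥(Kdiv U), P ↑k = 0 := by
      intro k
      rw [happ, hrK, sub_self]
    have hPmem : ∀ x, x ∈ Kdiv U → P x = 0 := fun x hx => hPK ⟨x, hx⟩
    have hrP : ∀ x, r (P x) = 0 := by
      intro x
      rw [happ, map_sub, hrK (r x), sub_self]
    have hPP : ∀ x, P (P x) = P x := by
      intro x
      conv_lhs => rw [happ (P x)]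
      rw [hrP, Submodule.coe_zero, sub_zero]
    have hPzero : ∀ x, P x = 0 → x ∈ Kdiv U := by
      intro x hx
      rw [happ] at hx
      have : x = ↑(r x) := by linear_combination hx
      rw [this]
      exact (r x).2
    set Θ : Z →+ Z := AddMonoidHom.mk' (fun x => P ((↑a : Z) * P x) + ↑(r x))
      (by
        intro x y
        show P ((↑a : Z) * P (x + y)) + ↑(r (x + y)) =
          (P ((↑a : Z) * P x) + ↑(r x)) + (P ((↑a : Z) * P y) + ↑(r y))
        rw [map_add P, mul_add, map_add P, map_add r]
        push_cast
        ring) with hΘ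
    have hinj : Function.Injective Θ := by
      rw [injective_iff_map_eq_zero]
      intro x hx
      rw [show Θ x = P ((↑a : Z) * P x) + ↑(r x) from rfl] at hx
      have hrx : r x = 0 := by
        have := congrArg r hx
        rw [map_add, hrP, map_zero, zero_add, hrK (r x)] at this
        exact this
      rw [hrx, Submodule.coe_zero, add_zero] at hx
      have hxK : (↑a : Z) * P x ∈ Kdiv U := hPzero _ hx
      have hPxK : P x ∈ Kdiv U := K_cancel ha hxK
      have hPx : P x = x := by
        rw [happ, hrx, Submodule.coe_zero, sub_zero]
      rw [hPx] at hPxK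
      have := hPmem x hPxK
      rw [hPx] at this
      exact this
    have hsurj : Function.Surjective Θ := by
      intro y
      obtain ⟨γ, hγ⟩ := claimA hU ha (P y)
      refine ⟨↑(r y) + P γ, ?_⟩
      rw [show ∀ w : Z, Θ w = P ((↑a : Z) * P w) + ↑(r w) from fun _ => rfl]
      have hrx : r (↑(r y) + P γ) = r y := by
        rw [map_add, hrK (r y), hrP, add_zero]
      have hPx : P (↑(r y) + P γ) = P γ := by
        rw [map_add, hPK (r y), hPP, zero_add]
      rw [hrx, hPx]
      have hsplit : (↑a : Z) * P γ = ↑a * γ - ↑a * ↑(r γ) := by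
        rw [happ]
        ring
      rw [hsplit, map_sub]
      have hterm : P ((↑a : Z) * ↑(r γ)) = 0 :=
        hPmem _ (mul_mem_Kdiv U (r γ).2 _)
      rw [hterm, sub_zero]
      have hPaγ : P ((↑a : Z) * γ) = P (P y) := by
        have hd : (↑a : Z) * γ - P y ∈ Kdiv U := by
          have := neg_mem hγ
          simpa using this
        have := hPmem _ hd
        rw [map_sub] at this
        linear_combination this
      rw [hPaγ, hPP, happ]
      ring
    refine ⟨AddEquiv.ofBijective Θ ⟨hinj, hsurj⟩, ?_⟩
    show Θ 1 = ↑a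
    rw [show Θ 1 = P ((↑a : Z) * P 1) + ↑(r 1) from rfl]
    rw [hr1, Submodule.coe_zero, add_zero]
    have hP1 : P 1 = 1 := by
      rw [happ, hr1, Submodule.coe_zero, sub_zero]
    rw [hP1, mul_one, happ, hra, Submodule.coe_zero, sub_zero]
noncomputable def germCongr {G H : Type} [AddCommGroup G] [AddCommGroup H] (e : G ≃+ H) :
    Germ (U : Filter ι) G ≃+ Germ (U : Filter ι) H where
  toFun := Germ.map e
  invFun := Germ.map e.symm
  left_inv x := x.inductionOn fun u => by
    rw [Germ.map_coe, Germ.map_coe]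
    exact Germ.coe_eq.mpr (Eventually.of_forall fun i => e.symm_apply_apply (u i))
  right_inv x := x.inductionOn fun u => by
    rw [Germ.map_coe, Germ.map_coe]
    exact Germ.coe_eq.mpr (Eventually.of_forall fun i => e.apply_symm_apply (u i))
  map_add' x y := Germ.inductionOn₂ x y fun u w => by
    show Germ.map e ((↑u : Germ (U : Filter ι) G) + (↑w : Germ (U : Filter ι) G))
        = Germ.map e (↑u : Germ (U : Filter ι) G) + Germ.map e (↑w : Germ (U : Filter ι) G)
    rw [← Germ.coe_add, Germ.map_coe, Germ.map_coe, Germ.map_coe, ← Germ.coe_add]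
    exact Germ.coe_eq.mpr (Eventually.of_forall fun i => map_add e (u i) (w i))

/-- The additive hom from germs of `Fin n → ℤ`-valued functions to tuples of germs. -/
noncomputable def piHom (n : ℕ) :
    Germ (U : Filter ι) (Fin n → ℤ) →+ (Fin n → Germ (U : Filter ι) ℤ) where
  toFun x k := Germ.map (fun g => g k) x
  map_zero' := by
    funext k
    show Germ.map (fun g => g k) (0 : Germ (U : Filter ι) (Fin n → ℤ)) = 0
    rw [← Germ.coe_zero, Germ.map_coe]
    rfl
  map_add' x y := Germ.inductionOn₂ x y fun u w => rfl

noncomputable def piEquiv (n : ℕ) :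
    Germ (U : Filter ι) (Fin n → ℤ) ≃+ (Fin n → Germ (U : Filter ι) ℤ) :=
  AddEquiv.ofBijective (piHom U n) (by
    constructor
    · intro x y
      refine Germ.inductionOn₂ x y fun u w h => ?_
      have hk : ∀ k, {i | u i k = w i k} ∈ U := by
        intro k
        have hck := congrFun h k
        have : (↑(fun i => u i k) : Germ (U : Filter ι) ℤ) = ↑(fun i => w i k) := hck
        exact Germ.coe_eq.mp this
      have hall : {i | ∀ k, u i k = w i k} ∈ U := by
        rw [← Ultrafilter.mem_coe]
        have : (⋂ k, {i | u i k = w i k}) ∈ (U : Filter ι) :=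
          (Filter.iInter_mem).mpr fun k => hk k
        refine Filter.mem_of_superset this ?_
        intro i hi
        simpa [Set.mem_iInter] using hi
      exact Germ.coe_eq.mpr (Filter.mem_of_superset hall fun i hi => funext hi)
    · intro x
      choose c hc using fun k => germ_exists_rep U (x k)
      refine ⟨(↑(fun i k => c k i) : Germ (U : Filter ι) (Fin n → ℤ)), ?_⟩
      funext k
      exact hc k)

variable {U} in
lemma germ_smul_comm {G : Type} [AddCommGroup G] (z : ℤ) (x : Z)
    (y : Germ (U : Filter ι) G) : x • (z • y) = (z • x) • y := by
  refine Germ.inductionOn₂ x y fun s u => ?_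
  rw [← Germ.coe_smul, ← Germ.coe_smul', ← Germ.coe_smul, ← Germ.coe_smul']
  refine Germ.coe_eq.mpr (Eventually.of_forall fun i => ?_)
  show s i • z • u i = (z • s i) • u i
  rw [smul_smul, smul_eq_mul, mul_comm]

end Stmt17

open Stmt17

/-- let `A` be free abelian of rank `n` with basis `v`, `A*` its ultrapower
over an ℵ₁-incomplete ultrafilter `D`, `B` a unimodular integer matrix, and
`α₁, …, αₙ ∈ ℤ*` divisible by no prime. Then there is a group automorphism `ψ` of `A*`
with `ψ(vᵢ) = Σ_k α_k b_{ik} v_k`. -/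
theorem exists_automorphism_ultrapower
    {ι : Type} (U : Ultrafilter ι)
    (hU : ∃ f : ℕ → Set ι, (∀ m, f m ∈ U) ∧ (⋂ m, f m) = ∅)
    (n : ℕ) (A : Type) [AddCommGroup A] (v : Module.Basis (Fin n) ℤ A)
    (B : Matrix (Fin n) (Fin n) ℤ) (hB : B.det = 1 ∨ B.det = -1)
    (α : Fin n → Germ (U : Filter ι) ℤ)
    (hα : ∀ (k : Fin n) (p : ℕ), p.Prime → ¬ ((p : Germ (U : Filter ι) ℤ) ∣ α k)) :
    ∃ ψ : Germ (U : Filter ι) A ≃+ Germ (U : Filter ι) A,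
      ∀ i : Fin n,
        ψ (Germ.const (v i)) = ∑ k : Fin n, α k • (Germ.const (B i k • v k)) := by
  classical
  have hθ : ∀ k : Fin n, ∃ θ : Germ (U : Filter ι) ℤ ≃+ Germ (U : Filter ι) ℤ,
      θ 1 = α k := fun k => exists_theta hU (hα k)
  choose θ hθ1 using hθ
  -- the basis automorphism induced by `B`
  have hdet : IsUnit (B.transpose.det) := by
    rw [Matrix.det_transpose]
    rcases hB with h | h <;> rw [h]
    · exact isUnit_one
    · exact isUnit_one.neg
  letI : Invertible B.transpose := Matrix.invertibleOfIsUnitDet _ hdet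
  set fB : A →ₗ[ℤ] A := Matrix.toLin v v B.transpose with hfB
  set fC : A →ₗ[ℤ] A := Matrix.toLin v v (⅟(B.transpose)) with hfC
  have h1 : fB ∘ₗ fC = LinearMap.id := by
    rw [hfB, hfC, ← Matrix.toLin_mul, mul_invOf_self, Matrix.toLin_one]
  have h2 : fC ∘ₗ fB = LinearMap.id := by
    rw [hfB, hfC, ← Matrix.toLin_mul, invOf_mul_self, Matrix.toLin_one]
  set eB : A ≃ₗ[ℤ] A := LinearEquiv.ofLinear fB fC h1 h2 with heBdef
  have heB : ∀ i, eB (v i) = ∑ k, B i k • v k := by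
    intro i
    show fB (v i) = _
    rw [hfB, Matrix.toLin_self]
    exact Finset.sum_congr rfl fun j _ => by rw [Matrix.transpose_apply]
  set e12 : Germ (U : Filter ι) A ≃+ (Fin n → Germ (U : Filter ι) ℤ) :=
    (germCongr U v.equivFun.toAddEquiv).trans (piEquiv U n) with he12
  set e3 : (Fin n → Germ (U : Filter ι) ℤ) ≃+ (Fin n → Germ (U : Filter ι) ℤ) :=
    AddEquiv.piCongrRight θ with he3
  have e12_coe : ∀ u : ι → A, e12 (↑u) = fun k => ↑(fun i => v.equivFun (u i) k) :=
    fun u => rfl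
  have e12_smul_const : ∀ (x : Germ (U : Filter ι) ℤ) (w : A),
      e12 (x • Germ.const w) = fun k => x * Germ.const (v.equivFun w k) := by
    intro x w
    refine Germ.inductionOn x fun s => ?_
    have hs : (↑s : Germ (U : Filter ι) ℤ) • (Germ.const w : Germ (U : Filter ι) A)
        = ↑(fun i => s i • w) := rfl
    rw [hs, e12_coe]
    funext k
    rw [show (↑s : Germ (U : Filter ι) ℤ) * Germ.const (v.equivFun w k)
        = Germ.ofFun (fun i => s i * v.equivFun w k) from rfl]
    refine Germ.coe_eq.mpr (Eventually.of_forall fun i => ?_)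
    show v.equivFun (s i • w) k = s i * v.equivFun w k
    rw [map_smul]
    rfl
  refine ⟨(germCongr U eB.toAddEquiv).trans (e12.trans (e3.trans e12.symm)), ?_⟩
  intro i
  rw [AddEquiv.trans_apply, AddEquiv.trans_apply, AddEquiv.trans_apply]
  have step1 : (germCongr U eB.toAddEquiv) (Germ.const (v i))
      = Germ.const (∑ k, B i k • v k) := by
    have : (germCongr U eB.toAddEquiv) (Germ.const (v i)) = Germ.const (eB (v i)) := rfl
    rw [this, heB i]
  rw [step1]
  have step2 : e12 (Germ.const (∑ k, B i k • v k)) = fun k => Germ.const (B i k) := by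
    have h0 : e12 (Germ.const (∑ k, B i k • v k))
        = fun k => (Germ.const (v.equivFun (∑ j, B i j • v j) k) : Germ (U : Filter ι) ℤ) :=
      rfl
    rw [h0]
    funext k
    congr 1
    have : v.equivFun (∑ j, B i j • v j) = ∑ j, B i j • v.equivFun (v j) := by
      rw [map_sum]
      exact Finset.sum_congr rfl fun j _ => by rw [map_smul]
    rw [this]
    simp only [Finset.sum_apply, Pi.smul_apply, Module.Basis.equivFun_self, smul_eq_mul, mul_ite,
      mul_one, mul_zero]
    rw [Finset.sum_ite_eq' (Finset.univ : Finset (Fin n)) k (fun j => B i j)]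
    simp
  rw [step2]
  have step3 : e3 (fun k => Germ.const (B i k)) = fun k => (B i k) • α k := by
    funext k
    show θ k (Germ.const (B i k)) = (B i k) • α k
    rw [← hθ1 k]
    have hc : (Germ.const (B i k) : Germ (U : Filter ι) ℤ)
        = (B i k) • (1 : Germ (U : Filter ι) ℤ) := by
      rw [zsmul_eq_mul, mul_one]
      rfl
    rw [hc]
    exact map_zsmul (θ k) _ _
  rw [step3, AddEquiv.symm_apply_eq]
  have hterm : ∀ k, α k • (Germ.const (B i k • v k) : Germ (U : Filter ι) A)
      = (B i k • α k) • Germ.const (v k) := by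
    intro k
    rw [Germ.const_smul]
    exact germ_smul_comm _ _ _
  rw [show (∑ k : Fin n, α k • (Germ.const (B i k • v k) : Germ (U : Filter ι) A))
      = ∑ k : Fin n, (B i k • α k) • Germ.const (v k) from
    Finset.sum_congr rfl fun k _ => hterm k]
  rw [map_sum]
  funext k'
  rw [Finset.sum_apply]
  have hione : ∀ k, e12 ((B i k • α k) • Germ.const (v k)) k'
      = (B i k • α k) * Germ.const (v.equivFun (v k) k') := by
    intro k
    rw [e12_smul_const]
  rw [Finset.sum_congr rfl fun k _ => hione k]
  simp only [Module.Basis.equivFun_self]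
  have : ∀ k, (B i k • α k) * (Germ.const (if k = k' then (1:ℤ) else 0) : Germ (U:Filter ι) ℤ)
      = if k = k' then (B i k • α k) else 0 := by
    intro k
    by_cases h : k = k'
    · rw [if_pos h, if_pos h, show (Germ.const (1 : ℤ) : Germ (U : Filter ι) ℤ) = 1 from rfl,
        mul_one]
    · rw [if_neg h, if_neg h, show (Germ.const (0 : ℤ) : Germ (U : Filter ι) ℤ) = 0 from rfl,
        mul_zero]
  rw [Finset.sum_congr rfl fun k _ => this k]
  simp
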